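/- For all real numbers α₁, α₂ with 0 < α₂ ≤ α₁ ≤ 1 and every ξ with 0 < ξ < 10⁻³, there exists N₀ such that the following holds for every bipartite graph G with bipartition {V₁, V₂} satisfying |V₁| = |V₂| = (α₁ + α₂ + 8ξ)k′ ≥ N₀ and |E(G)| ≥ (1 − ξ⁷)|V₁|². For every 2-edge-coloring of G, writing G₁ and G₂ for the spanning subgraphs formed by the edges of colors 1 and 2 respectively, there exists a color i ∈ {1, 2} such that some connected component of G_i contains a matching saturating at least (2α_i + 0.1ξ)k′ vertices. -/

import Mathlib

/-- The spanning subgraph of `G` consisting of the edges with color `i`,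
given an edge coloring `χ` (on pairs of vertices) with `r` colors. -/
def colorSubgraph {V : Type*} {r : ℕ} (G : SimpleGraph V) (χ : Sym2 V → Fin r) (i : Fin r) :
    SimpleGraph V where
  Adj u v := G.Adj u v ∧ χ s(u, v) = i
  symm := ⟨fun u v h => ⟨h.1.symm, by rw [Sym2.eq_swap]; exact h.2⟩⟩
  loopless := ⟨fun u h => G.loopless.irrefl u h.1⟩

/-- `G` contains a cycle of length `m` (on `m` vertices) as a subgraph. -/
def HasCycleLength {V : Type*} (G : SimpleGraph V) (m : ℕ) : Prop :=
  ∃ (v : V) (w : G.Walk v v), w.IsCycle ∧ w.length = m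

/-- `G` contains a connected matching (all of whose edges lie in one connected
component of `G`) saturating at least `b` vertices. -/
def HasConnMatching {V : Type*} (G : SimpleGraph V) (b : ℝ) : Prop :=
  ∃ M : G.Subgraph, M.IsMatching ∧
    (∀ u ∈ M.verts, ∀ v ∈ M.verts, G.Reachable u v) ∧ b ≤ (M.verts.ncard : ℝ)

open Finset Classical Sum

set_option maxHeartbeats 1000000

/-- a "pair matching" with relation R inside S₁ × S₂ -/
def PairM {α β : Type*} (R : α → β → Prop) (S₁ : Finset α) (S₂ : Finset β)
    (P : Finset (α × β)) : Prop :=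
  (∀ p ∈ P, p.1 ∈ S₁ ∧ p.2 ∈ S₂ ∧ R p.1 p.2) ∧
  Set.InjOn Prod.fst (↑P : Set (α × β)) ∧ Set.InjOn Prod.snd (↑P : Set (α × β))

lemma exists_maximal_pairs {α β : Type*} [DecidableEq α] [DecidableEq β]
    (R : α → β → Prop) (S₁ : Finset α) (S₂ : Finset β) :
    ∃ P : Finset (α × β), PairM R S₁ S₂ P ∧
      ∀ a ∈ S₁, a ∉ P.image Prod.fst → ∀ b ∈ S₂, b ∉ P.image Prod.snd → ¬ R a b := by
  classical
  set T := (S₁ ×ˢ S₂).powerset.filter (fun P => PairM R S₁ S₂ P) with hT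
  have hne : T.Nonempty := ⟨∅, by
    simp [hT, PairM, Set.InjOn]⟩
  obtain ⟨P, hPT, hmax⟩ := T.exists_max_image Finset.card hne
  simp only [hT, mem_filter, mem_powerset] at hPT
  refine ⟨P, hPT.2, ?_⟩
  intro a ha hfa b hb hsb hR
  have hins : insert (a, b) P ∈ T := by
    simp only [hT, mem_filter, mem_powerset]
    constructor
    · intro p hp
      rcases mem_insert.1 hp with rfl | hp
      · exact mem_product.2 ⟨ha, hb⟩
      · exact hPT.1 hp
    · obtain ⟨h1, h2, h3⟩ := hPT.2
      refine ⟨?_, ?_, ?_⟩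
      · intro p hp
        rcases mem_insert.1 hp with rfl | hp
        · exact ⟨ha, hb, hR⟩
        · exact h1 p hp
      · intro p hp q hq hpq
        simp only [coe_insert, Set.mem_insert_iff, mem_coe] at hp hq
        rcases hp with rfl | hp <;> rcases hq with rfl | hq
        · rfl
        · exact absurd (mem_image.2 ⟨q, hq, hpq.symm⟩) hfa
        · exact absurd (mem_image.2 ⟨p, hp, hpq⟩) hfa
        · exact h2 hp hq hpq
      · intro p hp q hq hpq
        simp only [coe_insert, Set.mem_insert_iff, mem_coe] at hp hq
        rcases hp with rfl | hp <;> rcases hq with rfl | hq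
        · rfl
        · exact absurd (mem_image.2 ⟨q, hq, hpq.symm⟩) hsb
        · exact absurd (mem_image.2 ⟨p, hp, hpq⟩) hsb
        · exact h3 hp hq hpq
  have hle := hmax _ hins
  have : (a, b) ∉ P := fun hmem => hfa (mem_image.2 ⟨(a,b), hmem, rfl⟩)
  rw [card_insert_of_notMem this] at hle
  omega

lemma pairM_card_fst {α β : Type*} [DecidableEq α] [DecidableEq β]
    {R : α → β → Prop} {S₁ : Finset α} {S₂ : Finset β} {P : Finset (α × β)}
    (h : PairM R S₁ S₂ P) : (P.image Prod.fst).card = P.card ∧ P.image Prod.fst ⊆ S₁ := by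
  refine ⟨Finset.card_image_of_injOn h.2.1, ?_⟩
  intro a ha
  obtain ⟨p, hp, rfl⟩ := mem_image.1 ha
  exact (h.1 p hp).1

lemma pairM_card_snd {α β : Type*} [DecidableEq α] [DecidableEq β]
    {R : α → β → Prop} {S₁ : Finset α} {S₂ : Finset β} {P : Finset (α × β)}
    (h : PairM R S₁ S₂ P) : (P.image Prod.snd).card = P.card ∧ P.image Prod.snd ⊆ S₂ := by
  refine ⟨Finset.card_image_of_injOn h.2.2, ?_⟩
  intro a ha
  obtain ⟨p, hp, rfl⟩ := mem_image.1 ha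
  exact (h.1 p hp).2.1

/-- leftover cardinality -/
lemma leftover_card {α : Type*} [DecidableEq α] {S : Finset α} {I : Finset α}
    (hsub : I ⊆ S) (hI : I.card = k) : ((S \ I).card : ℝ) = (S.card : ℝ) - k := by
  rw [Finset.card_sdiff_of_subset hsub, hI]
  have := Finset.card_le_card hsub
  rw [hI] at this
  rw [Nat.cast_sub this]

open Sum in
lemma pairs_to_conn {N : ℕ} (G : SimpleGraph (Fin N ⊕ Fin N))
    (χ : Sym2 (Fin N ⊕ Fin N) → Fin 2) (i : Fin 2) (P : Finset (Fin N × Fin N))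
    (hadj : ∀ p ∈ P, (colorSubgraph G χ i).Adj (inl p.1) (inr p.2))
    (hinj1 : Set.InjOn Prod.fst (↑P : Set (Fin N × Fin N)))
    (hinj2 : Set.InjOn Prod.snd (↑P : Set (Fin N × Fin N)))
    (hreach : ∀ p ∈ P, ∀ q ∈ P,
      (colorSubgraph G χ i).Reachable (inl p.1) (inl q.1))
    (b : ℝ) (hb : b ≤ 2 * P.card) :
    HasConnMatching (colorSubgraph G χ i) b := by
  classical
  set H := colorSubgraph G χ i with hH
  set F : Finset (Fin N ⊕ Fin N) :=
    P.image (fun p => (inl p.1 : Fin N ⊕ Fin N)) ∪ P.image (fun p => inr p.2) with hF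
  have hMadj : ∀ u v : Fin N ⊕ Fin N,
      (∃ p ∈ P, (u = inl p.1 ∧ v = inr p.2) ∨ (v = inl p.1 ∧ u = inr p.2)) → H.Adj u v := by
    rintro u v ⟨p, hp, ⟨rfl, rfl⟩ | ⟨rfl, rfl⟩⟩
    · exact hadj p hp
    · exact (hadj p hp).symm
  refine ⟨{ verts := ↑F
            Adj := fun u v => ∃ p ∈ P, (u = inl p.1 ∧ v = inr p.2) ∨ (v = inl p.1 ∧ u = inr p.2)
            adj_sub := fun {u v} h => hMadj u v h
            edge_vert := ?_
            symm := ?_ }, ?_, ?_, ?_⟩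
  · rintro u v ⟨p, hp, ⟨rfl, rfl⟩ | ⟨rfl, rfl⟩⟩
    · exact mem_coe.2 (mem_union_left _ (mem_image.2 ⟨p, hp, rfl⟩))
    · exact mem_coe.2 (mem_union_right _ (mem_image.2 ⟨p, hp, rfl⟩))
  · refine ⟨?_⟩; rintro u v ⟨p, hp, ⟨rfl, rfl⟩ | ⟨rfl, rfl⟩⟩
    · exact ⟨p, hp, Or.inr ⟨rfl, rfl⟩⟩
    · exact ⟨p, hp, Or.inl ⟨rfl, rfl⟩⟩
  · -- IsMatching
    intro v hv
    simp only [Set.mem_setOf_eq, mem_coe, hF, mem_union, mem_image] at hv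
    rcases hv with ⟨p, hp, rfl⟩ | ⟨p, hp, rfl⟩
    · refine ⟨inr p.2, ⟨p, hp, Or.inl ⟨rfl, rfl⟩⟩, ?_⟩
      rintro w ⟨q, hq, ⟨hq1, rfl⟩ | ⟨hq1, hq2⟩⟩
      · have : q.1 = p.1 := (inl.inj hq1).symm
        have : q = p := hinj2 (mem_coe.2 hq) (mem_coe.2 hp)
          (congrArg Prod.snd (hinj1 (mem_coe.2 hq) (mem_coe.2 hp) this))
        rw [this]
      · exact absurd hq2 (by simp)
    · refine ⟨inl p.1, ⟨p, hp, Or.inr ⟨rfl, rfl⟩⟩, ?_⟩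
      rintro w ⟨q, hq, ⟨hq1, hq2⟩ | ⟨rfl, hq2⟩⟩
      · exact absurd hq1 (by simp)
      · have : q.2 = p.2 := (inr.inj hq2).symm
        have : q = p := hinj1 (mem_coe.2 hq) (mem_coe.2 hp)
          (congrArg Prod.fst (hinj2 (mem_coe.2 hq) (mem_coe.2 hp) this))
        rw [this]
  · -- reachability
    intro u hu v hv
    simp only [mem_coe, hF, mem_union, mem_image] at hu hv
    have key : ∀ w, ((∃ p ∈ P, inl p.1 = w) ∨ ∃ p ∈ P, inr p.2 = w) →
        ∃ p ∈ P, H.Reachable (inl p.1) w := by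
      rintro w (⟨p, hp, rfl⟩ | ⟨p, hp, rfl⟩)
      · exact ⟨p, hp, SimpleGraph.Reachable.refl _⟩
      · exact ⟨p, hp, (hadj p hp).reachable⟩
    obtain ⟨p, hp, hpu⟩ := key u hu
    obtain ⟨q, hq, hqv⟩ := key v hv
    exact (hpu.symm.trans (hreach p hp q hq)).trans hqv
  · -- cardinality
    have h1 : (P.image (fun p => (inl p.1 : Fin N ⊕ Fin N))).card = P.card := by
      apply Finset.card_image_of_injOn
      intro p hp q hq hpq
      exact hinj1 hp hq (inl.inj hpq)
    have h2 : (P.image (fun p => (inr p.2 : Fin N ⊕ Fin N))).card = P.card := by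
      apply Finset.card_image_of_injOn
      intro p hp q hq hpq
      exact hinj2 hp hq (inr.inj hpq)
    have hdisj : Disjoint (P.image (fun p => (inl p.1 : Fin N ⊕ Fin N)))
        (P.image (fun p => inr p.2)) := by
      rw [Finset.disjoint_left]
      rintro a ha hb
      obtain ⟨p, _, rfl⟩ := mem_image.1 ha
      obtain ⟨q, _, hq⟩ := mem_image.1 hb
      exact absurd hq (by simp)
    have : (↑F : Set (Fin N ⊕ Fin N)).ncard = F.card := Set.ncard_coe_finset F
    rw [this, hF, Finset.card_union_of_disjoint hdisj, h1, h2]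
    push_cast
    linarith

lemma common_nbr {N : ℕ} {adj : Fin N → Fin N → Prop} [∀ a b, Decidable (adj a b)]
    {D₀ : ℕ} {S : Finset (Fin N)} {a a' : Fin N}
    (ha : (S.filter fun b => ¬ adj a b).card ≤ D₀)
    (ha' : (S.filter fun b => ¬ adj a' b).card ≤ D₀)
    (hS : 2 * D₀ < S.card) : ∃ b ∈ S, adj a b ∧ adj a' b := by
  by_contra h
  push_neg at h
  have hsub : S ⊆ (S.filter fun b => ¬ adj a b) ∪ (S.filter fun b => ¬ adj a' b) := by
    intro b hb
    by_cases h1 : adj a b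
    · exact mem_union_right _ (mem_filter.2 ⟨hb, h b hb h1⟩)
    · exact mem_union_left _ (mem_filter.2 ⟨hb, h1⟩)
  have := (card_le_card hsub).trans (card_union_le _ _)
  omega

lemma exists_nbr {N : ℕ} {adj : Fin N → Fin N → Prop} [∀ a b, Decidable (adj a b)]
    {D₀ : ℕ} {S : Finset (Fin N)} {a : Fin N}
    (ha : (S.filter fun b => ¬ adj a b).card ≤ D₀)
    (hS : D₀ < S.card) : ∃ b ∈ S, adj a b := by
  by_contra h
  push_neg at h
  have hsub : S ⊆ S.filter fun b => ¬ adj a b := fun b hb => mem_filter.2 ⟨hb, h b hb⟩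
  have := card_le_card hsub
  omega

lemma edge_pairs_count {N : ℕ} (G : SimpleGraph (Fin N ⊕ Fin N))
    (hle : G ≤ completeBipartiteGraph (Fin N) (Fin N)) [DecidableRel G.Adj] :
    ((univ ×ˢ univ).filter (fun p : Fin N × Fin N => G.Adj (inl p.1) (inr p.2))).card
      = G.edgeSet.ncard := by
  classical
  rw [← SimpleGraph.coe_edgeFinset, Set.ncard_coe_finset]
  apply Finset.card_bij (fun p _ => s(inl p.1, inr p.2))
  · intro p hp
    simp only [mem_filter] at hp
    rw [SimpleGraph.mem_edgeFinset, SimpleGraph.mem_edgeSet]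
    exact hp.2
  · intro p hp q hq hpq
    simp only [Sym2.eq, Sym2.rel_iff', Prod.mk.injEq, Prod.swap_prod_mk] at hpq
    rcases hpq with ⟨h1, h2⟩ | ⟨h1, h2⟩
    · exact Prod.ext (inl.inj h1) (inr.inj h2)
    · exact absurd h1 (by simp)
  · intro e he
    rw [SimpleGraph.mem_edgeFinset] at he
    induction e with
    | _ u v =>
      have hadj : G.Adj u v := he
      have hbi := hle hadj
      rcases u with a | a <;> rcases v with b | b
      · simp [completeBipartiteGraph] at hbi
      · exact ⟨(a, b), mem_filter.2 ⟨mem_product.2 ⟨mem_univ _, mem_univ _⟩, hadj⟩, rfl⟩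
      · exact ⟨(b, a), mem_filter.2 ⟨mem_product.2 ⟨mem_univ _, mem_univ _⟩, hadj.symm⟩,
          Sym2.eq_swap⟩
      · simp [completeBipartiteGraph] at hbi

lemma fiber_count {N : ℕ} (p : Fin N → Fin N → Prop) [∀ a b, Decidable (p a b)] :
    ((univ ×ˢ univ).filter (fun q : Fin N × Fin N => p q.1 q.2)).card
      = ∑ a : Fin N, (univ.filter fun b => p a b).card := by
  classical
  rw [Finset.card_eq_sum_card_fiberwise (f := Prod.fst) (t := univ) (fun x _ => mem_univ _)]
  refine Finset.sum_congr rfl fun a _ => ?_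
  apply Finset.card_bij (fun q _ => q.2)
  · intro q hq
    simp only [mem_filter, mem_product] at hq ⊢
    obtain ⟨⟨_, hp⟩, heq⟩ := hq
    subst heq
    exact ⟨mem_univ _, hp⟩
  · intro q hq q' hq' h
    simp only [mem_filter] at hq hq'
    exact Prod.ext (hq.2.trans hq'.2.symm) h
  · intro b hb
    simp only [mem_filter] at hb ⊢
    exact ⟨(a, b), by simp [hb.2], rfl⟩

lemma fiber_count_snd {N : ℕ} (p : Fin N → Fin N → Prop) [∀ a b, Decidable (p a b)] :
    ((univ ×ˢ univ).filter (fun q : Fin N × Fin N => p q.1 q.2)).card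
      = ∑ b : Fin N, (univ.filter fun a => p a b).card := by
  classical
  rw [Finset.card_eq_sum_card_fiberwise (f := Prod.snd) (t := univ) (fun x _ => mem_univ _)]
  refine Finset.sum_congr rfl fun b _ => ?_
  apply Finset.card_bij (fun q _ => q.1)
  · intro q hq
    simp only [mem_filter, mem_product] at hq ⊢
    obtain ⟨⟨_, hp⟩, heq⟩ := hq
    subst heq
    exact ⟨mem_univ _, hp⟩
  · intro q hq q' hq' h
    simp only [mem_filter] at hq hq'
    exact Prod.ext h (hq.2.trans hq'.2.symm)
  · intro a ha
    simp only [mem_filter] at ha ⊢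
    exact ⟨(a, b), by simp [ha.2], rfl⟩

lemma union3 {α β : Type*} [DecidableEq α] [DecidableEq β]
    {P₁ P₂ P₃ : Finset (α × β)}
    (i₁ : Set.InjOn Prod.fst (↑P₁ : Set (α×β))) (i₂ : Set.InjOn Prod.fst (↑P₂ : Set (α×β)))
    (i₃ : Set.InjOn Prod.fst (↑P₃ : Set (α×β)))
    (j₁ : Set.InjOn Prod.snd (↑P₁ : Set (α×β))) (j₂ : Set.InjOn Prod.snd (↑P₂ : Set (α×β)))
    (j₃ : Set.InjOn Prod.snd (↑P₃ : Set (α×β)))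
    (f12 : ∀ p ∈ P₁, ∀ q ∈ P₂, p.1 ≠ q.1) (f13 : ∀ p ∈ P₁, ∀ q ∈ P₃, p.1 ≠ q.1)
    (f23 : ∀ p ∈ P₂, ∀ q ∈ P₃, p.1 ≠ q.1)
    (s12 : ∀ p ∈ P₁, ∀ q ∈ P₂, p.2 ≠ q.2) (s13 : ∀ p ∈ P₁, ∀ q ∈ P₃, p.2 ≠ q.2)
    (s23 : ∀ p ∈ P₂, ∀ q ∈ P₃, p.2 ≠ q.2) :
    Set.InjOn Prod.fst (↑(P₁ ∪ P₂ ∪ P₃) : Set (α×β)) ∧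
    Set.InjOn Prod.snd (↑(P₁ ∪ P₂ ∪ P₃) : Set (α×β)) ∧
    (P₁ ∪ P₂ ∪ P₃).card = P₁.card + P₂.card + P₃.card := by
  have hmem : ∀ p : α × β, p ∈ P₁ ∪ P₂ ∪ P₃ → p ∈ P₁ ∨ p ∈ P₂ ∨ p ∈ P₃ := by
    intro p hp
    rw [mem_union, mem_union] at hp
    tauto
  refine ⟨?_, ?_, ?_⟩
  · intro p hp q hq heq
    rcases hmem p (mem_coe.1 hp) with h1 | h1 | h1 <;> rcases hmem q (mem_coe.1 hq) with h2 | h2 | h2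
    · exact i₁ (mem_coe.2 h1) (mem_coe.2 h2) heq
    · exact absurd heq (f12 p h1 q h2)
    · exact absurd heq (f13 p h1 q h2)
    · exact absurd heq.symm (f12 q h2 p h1)
    · exact i₂ (mem_coe.2 h1) (mem_coe.2 h2) heq
    · exact absurd heq (f23 p h1 q h2)
    · exact absurd heq.symm (f13 q h2 p h1)
    · exact absurd heq.symm (f23 q h2 p h1)
    · exact i₃ (mem_coe.2 h1) (mem_coe.2 h2) heq
  · intro p hp q hq heq
    rcases hmem p (mem_coe.1 hp) with h1 | h1 | h1 <;> rcases hmem q (mem_coe.1 hq) with h2 | h2 | h2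
    · exact j₁ (mem_coe.2 h1) (mem_coe.2 h2) heq
    · exact absurd heq (s12 p h1 q h2)
    · exact absurd heq (s13 p h1 q h2)
    · exact absurd heq.symm (s12 q h2 p h1)
    · exact j₂ (mem_coe.2 h1) (mem_coe.2 h2) heq
    · exact absurd heq (s23 p h1 q h2)
    · exact absurd heq.symm (s13 q h2 p h1)
    · exact absurd heq.symm (s23 q h2 p h1)
    · exact j₃ (mem_coe.2 h1) (mem_coe.2 h2) heq
  · have d12 : Disjoint P₁ P₂ := by
      rw [Finset.disjoint_left]
      intro p h1 h2
      exact f12 p h1 p h2 rfl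
    have d13 : Disjoint (P₁ ∪ P₂) P₃ := by
      rw [Finset.disjoint_left]
      intro p h1 h2
      rcases mem_union.1 h1 with h | h
      · exact f13 p h p h2 rfl
      · exact f23 p h p h2 rfl
    rw [card_union_of_disjoint d13, card_union_of_disjoint d12]



set_option maxHeartbeats 2000000 in
/-- For `0 < α₂ ≤ α₁ ≤ 1` and `0 < ξ < 10⁻³` there exists `N₀` such that: for every
bipartite graph `G` with parts of size `N = (α₁ + α₂ + 8ξ)k' ≥ N₀` and at least
`(1 − ξ⁷)N²` edges, every 2-edge-coloring of `G` has a color `i` such that some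
component of the color-`i` subgraph contains a matching saturating at least
`(2α_i + 0.1ξ)k'` vertices. -/
theorem connected_matching_two_colors (α₁ α₂ : ℝ) (hα₂ : 0 < α₂) (hα₂₁ : α₂ ≤ α₁)
    (hα₁ : α₁ ≤ 1) (ξ : ℝ) (hξ0 : 0 < ξ) (hξ1 : ξ < 1 / 1000) :
    ∃ N₀ : ℕ, ∀ (k' : ℝ) (N : ℕ), (N : ℝ) = (α₁ + α₂ + 8 * ξ) * k' → N₀ ≤ N →
      ∀ G : SimpleGraph (Fin N ⊕ Fin N), G ≤ completeBipartiteGraph (Fin N) (Fin N) →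
      (1 - ξ ^ 7) * (N : ℝ) ^ 2 ≤ (G.edgeSet.ncard : ℝ) →
      ∀ χ : Sym2 (Fin N ⊕ Fin N) → Fin 2,
        ∃ i : Fin 2, HasConnMatching (colorSubgraph G χ i)
          ((2 * (if i = 0 then α₁ else α₂) + 0.1 * ξ) * k') := by
  classical
  refine ⟨⌈(10^6 : ℝ)/ξ^4⌉₊, ?_⟩
  intro k' N hNk hN₀ G hle hE χ
  haveI : DecidableRel G.Adj := Classical.decRel _
  by_contra hno
  push_neg at hno
  have hξ1' : ξ < 1 := by linarith
  have hξ2 : ξ^2 ≤ (1/1000000 : ℝ) := by nlinarith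
  have hξN : (10:ℝ)^6 ≤ ξ^4 * (N:ℝ) := by
    have h1 : ((10:ℝ)^6/ξ^4) ≤ ((⌈(10^6 : ℝ)/ξ^4⌉₊ : ℕ) : ℝ) := Nat.le_ceil _
    have h2 : ((⌈(10^6 : ℝ)/ξ^4⌉₊ : ℕ) : ℝ) ≤ (N : ℝ) := Nat.cast_le.2 hN₀
    have hξ4 : 0 < ξ^4 := by positivity
    rw [div_le_iff₀ hξ4] at h1
    nlinarith
  have hNpos : (0:ℝ) < (N:ℝ) := by nlinarith [pow_pos hξ0 4, sq_nonneg (ξ^2 - 1)]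
  have hNpos' : 0 < N := by exact_mod_cast hNpos
  have hk'pos : 0 < k' := by
    rcases lt_trichotomy k' 0 with h | h | h
    · nlinarith
    · rw [h] at hNk; simp at hNk; nlinarith
    · exact h
  set m : Fin 2 → ℝ := fun i => (if i = 0 then α₁ else α₂) * k' + 0.05*ξ*k' with hm
  have ht : ∀ i : Fin 2, (2 * (if i = 0 then α₁ else α₂) + 0.1 * ξ) * k' = 2 * m i := by
    intro i; simp only [hm]; ring
  have hm21 : m 1 ≤ m 0 := by
    simp only [hm]; norm_num; nlinarith
  have hm1pos : 0 < m 1 := by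
    simp only [hm]; norm_num; nlinarith
  have hgap : m 0 + m 1 + 3.9*(ξ*(N:ℝ)) ≤ (N:ℝ) := by
    simp only [hm]; norm_num
    nlinarith [mul_pos hξ0 hk'pos]
  have hm0N : m 0 ≤ (N:ℝ) := by
    simp only [hm]; norm_num; nlinarith
  set D₀ : ℕ := ⌈ξ^3*(N:ℝ)⌉₊ with hD₀def
  have hD₀l : ξ^3*(N:ℝ) ≤ (D₀:ℝ) := Nat.le_ceil _
  have hD₀u : (D₀:ℝ) ≤ 0.001*(ξ*(N:ℝ)) := by
    have h1 : (D₀:ℝ) < ξ^3*(N:ℝ) + 1 := Nat.ceil_lt_add_one (by positivity)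
    have h3 : ξ^3*(N:ℝ) ≤ (1/1000000 : ℝ) * (ξ*(N:ℝ)) := by
      have : ξ^3*(N:ℝ) = ξ^2 * (ξ*(N:ℝ)) := by ring
      rw [this]
      apply mul_le_mul_of_nonneg_right _ (by positivity)
      exact hξ2
    have h4 : (1:ℝ) ≤ (1/1000000 : ℝ) * (ξ^4*(N:ℝ)) := by
      rw [show ((1/1000000 : ℝ) * (ξ^4*(N:ℝ))) = (ξ^4*(N:ℝ))/(10^6) by norm_num [zpow_neg]; ring]
      rw [le_div_iff₀ (by norm_num)]
      linarith
    have h5 : ξ^4*(N:ℝ) ≤ ξ*(N:ℝ) := by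
      have hξ3le1 : ξ^3 ≤ 1 := pow_le_one₀ (le_of_lt hξ0) (le_of_lt hξ1')
      calc ξ^4*(N:ℝ) = ξ^3*(ξ*(N:ℝ)) := by ring
        _ ≤ 1*(ξ*(N:ℝ)) := mul_le_mul_of_nonneg_right hξ3le1 (by positivity)
        _ = ξ*(N:ℝ) := one_mul _
    have h6 : (0:ℝ) < (1/1000000 : ℝ) := by positivity
    nlinarith
  have hxN : (0:ℝ) < ξ*(N:ℝ) := by positivity
  -- missing pairs
  set MP : Finset (Fin N × Fin N) :=
    (univ ×ˢ univ).filter (fun p : Fin N × Fin N => ¬ G.Adj (inl p.1) (inr p.2)) with hMPdef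
  have hMP : (MP.card : ℝ) ≤ ξ^7*(N:ℝ)^2 := by
    have hpc := edge_pairs_count G hle
    have hsplit : ((univ ×ˢ univ).filter
        (fun p : Fin N × Fin N => G.Adj (inl p.1) (inr p.2))).card + MP.card = N*N := by
      rw [hMPdef, Finset.card_filter_add_card_filter_not]
      simp [Finset.card_univ]
    have h1 : (1 - ξ ^ 7) * (N : ℝ) ^ 2 ≤
        (((univ ×ˢ univ).filter (fun p : Fin N × Fin N => G.Adj (inl p.1) (inr p.2))).card : ℝ) := by
      rw [hpc]; exact hE
    have h2 : ((((univ ×ˢ univ).filter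
        (fun p : Fin N × Fin N => G.Adj (inl p.1) (inr p.2))).card : ℕ) : ℝ) + (MP.card:ℝ)
        = (N:ℝ)*(N:ℝ) := by exact_mod_cast congrArg (Nat.cast : ℕ → ℝ) hsplit
    nlinarith
  -- block bounds
  have hblock : ∀ L₁ L₂ : Finset (Fin N), (∀ a ∈ L₁, ∀ b ∈ L₂, ¬ G.Adj (inl a) (inr b)) →
      (L₁.card : ℝ) * L₂.card ≤ ξ^7*(N:ℝ)^2 := by
    intro L₁ L₂ h
    have hsub : L₁ ×ˢ L₂ ⊆ MP := by
      intro p hp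
      rw [mem_product] at hp
      rw [hMPdef, mem_filter]
      exact ⟨mem_product.2 ⟨mem_univ _, mem_univ _⟩, h p.1 hp.1 p.2 hp.2⟩
    have := card_le_card hsub
    rw [Finset.card_product] at this
    calc (L₁.card : ℝ) * L₂.card = ((L₁.card * L₂.card : ℕ) : ℝ) := by push_cast; ring
      _ ≤ (MP.card : ℝ) := by exact_mod_cast this
      _ ≤ _ := hMP
  have hblockz : ∀ L₁ L₂ : Finset (Fin N), (∀ a ∈ L₁, ∀ b ∈ L₂, ¬ G.Adj (inl a) (inr b)) →
      ((L₁.card : ℝ) ≤ 0.01*(ξ*(N:ℝ)) ∨ (L₂.card : ℝ) ≤ 0.01*(ξ*(N:ℝ))) := by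
    intro L₁ L₂ h
    by_contra hcon
    push_neg at hcon
    have hb := hblock L₁ L₂ h
    have hξ5 : ξ^5 ≤ (1/1000000000000 : ℝ) := by
      calc ξ^5 = (ξ^2*ξ^2)*ξ := by ring
        _ ≤ ((1/1000000 : ℝ)*(1/1000000 : ℝ))*1 :=
            mul_le_mul (mul_le_mul hξ2 hξ2 (by positivity) (by positivity)) (le_of_lt hξ1')
              (le_of_lt hξ0) (by positivity)
        _ ≤ (1/1000000000000 : ℝ) := by norm_num
    have hprod : 0.01*(ξ*(N:ℝ)) * (0.01*(ξ*(N:ℝ))) < (L₁.card:ℝ) * L₂.card :=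
      mul_lt_mul'' hcon.1 hcon.2 (by positivity) (by positivity)
    have hsq : ξ^7*(N:ℝ)^2 = ξ^5*(ξ*(N:ℝ))^2 := by ring
    have h2 : ξ^5*(ξ*(N:ℝ))^2 ≤ (1/1000000000000 : ℝ)*(ξ*(N:ℝ))^2 :=
      mul_le_mul_of_nonneg_right hξ5 (sq_nonneg _)
    nlinarith [mul_pos hxN hxN]
  -- cleaned sides
  set V₁' : Finset (Fin N) :=
    univ.filter (fun a : Fin N => (univ.filter fun b => ¬ G.Adj (inl a) (inr b)).card ≤ D₀)
    with hV₁def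
  set V₂' : Finset (Fin N) :=
    univ.filter (fun b : Fin N => (univ.filter fun a => ¬ G.Adj (inl a) (inr b)).card ≤ D₀)
    with hV₂def
  have hclean1 : ∀ a ∈ V₁', ∀ S : Finset (Fin N),
      (S.filter fun b => ¬ G.Adj (inl a) (inr b)).card ≤ D₀ := by
    intro a ha S
    rw [hV₁def, mem_filter] at ha
    exact le_trans (card_le_card (filter_subset_filter _ (subset_univ S))) ha.2
  have hclean2 : ∀ b ∈ V₂', ∀ S : Finset (Fin N),
      (S.filter fun a => ¬ G.Adj (inl a) (inr b)).card ≤ D₀ := by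
    intro b hb S
    rw [hV₂def, mem_filter] at hb
    exact le_trans (card_le_card (filter_subset_filter _ (subset_univ S))) hb.2
  have hncard : ∀ (f : Fin N → Finset (Fin N) → Finset (Fin N)),
      True := fun _ => trivial
  have hn₁ : (N:ℝ) - 0.001*(ξ*(N:ℝ)) ≤ V₁'.card := by
    have hsum : MP.card = ∑ a : Fin N, (univ.filter fun b => ¬ G.Adj (inl a) (inr b)).card :=
      fiber_count (p := fun a b => ¬ G.Adj (inl a) (inr b))
    have hcardsplit : V₁'.card + (univ.filter (fun a : Fin N =>
        ¬ ((univ.filter fun b => ¬ G.Adj (inl a) (inr b)).card ≤ D₀))).card = N := by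
      rw [hV₁def, Finset.card_filter_add_card_filter_not]
      simp
    set Bad := univ.filter (fun a : Fin N =>
        ¬ ((univ.filter fun b => ¬ G.Adj (inl a) (inr b)).card ≤ D₀)) with hBad
    have hBadsum : Bad.card * (D₀+1) ≤ MP.card := by
      rw [hsum]
      calc Bad.card * (D₀+1) = ∑ _a ∈ Bad, (D₀+1) := by rw [Finset.sum_const, smul_eq_mul]
        _ ≤ ∑ a ∈ Bad, (univ.filter fun b => ¬ G.Adj (inl a) (inr b)).card := by
            apply Finset.sum_le_sum
            intro a ha
            rw [hBad, mem_filter] at ha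
            omega
        _ ≤ _ := Finset.sum_le_sum_of_subset (subset_univ _)
    have hBadR : (Bad.card : ℝ) ≤ 0.001*(ξ*(N:ℝ)) := by
      by_contra hcon
      push_neg at hcon
      have h1 : ((Bad.card * (D₀+1) : ℕ) : ℝ) ≤ ξ^7*(N:ℝ)^2 := le_trans (by exact_mod_cast hBadsum) hMP
      push_cast at h1
      have h2 : ξ^3*(N:ℝ) ≤ (D₀:ℝ)+1 := by linarith
      have key : (0.001*(ξ*(N:ℝ)))*(ξ^3*(N:ℝ)) ≤ (Bad.card:ℝ)*((D₀:ℝ)+1) :=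
        mul_le_mul hcon.le h2 (by positivity) (Nat.cast_nonneg _)
      have hξ3 : ξ^3 ≤ (1/1000000000:ℝ) := by nlinarith
      have h7 : ξ^7*(N:ℝ)^2 ≤ (1/1000000000:ℝ)*(ξ^4*(N:ℝ)^2) := by
        calc ξ^7*(N:ℝ)^2 = ξ^3*(ξ^4*(N:ℝ)^2) := by ring
          _ ≤ _ := mul_le_mul_of_nonneg_right hξ3 (by positivity)
      nlinarith [mul_pos (mul_pos (mul_pos hξ0 hξ0) (mul_pos hξ0 hξ0)) (mul_pos hNpos hNpos)]
    have : (V₁'.card : ℝ) + Bad.card = N := by exact_mod_cast congrArg (Nat.cast : ℕ → ℝ) hcardsplit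
    linarith
  have hn₂ : (N:ℝ) - 0.001*(ξ*(N:ℝ)) ≤ V₂'.card := by
    have hsum : MP.card = ∑ b : Fin N, (univ.filter fun a => ¬ G.Adj (inl a) (inr b)).card :=
      fiber_count_snd (p := fun a b => ¬ G.Adj (inl a) (inr b))
    have hcardsplit : V₂'.card + (univ.filter (fun b : Fin N =>
        ¬ ((univ.filter fun a => ¬ G.Adj (inl a) (inr b)).card ≤ D₀))).card = N := by
      rw [hV₂def, Finset.card_filter_add_card_filter_not]
      simp
    set Bad := univ.filter (fun b : Fin N =>
        ¬ ((univ.filter fun a => ¬ G.Adj (inl a) (inr b)).card ≤ D₀)) with hBad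
    have hBadsum : Bad.card * (D₀+1) ≤ MP.card := by
      rw [hsum]
      calc Bad.card * (D₀+1) = ∑ _b ∈ Bad, (D₀+1) := by rw [Finset.sum_const, smul_eq_mul]
        _ ≤ ∑ b ∈ Bad, (univ.filter fun a => ¬ G.Adj (inl a) (inr b)).card := by
            apply Finset.sum_le_sum
            intro b hb
            rw [hBad, mem_filter] at hb
            omega
        _ ≤ _ := Finset.sum_le_sum_of_subset (subset_univ _)
    have hBadR : (Bad.card : ℝ) ≤ 0.001*(ξ*(N:ℝ)) := by
      by_contra hcon
      push_neg at hcon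
      have h1 : ((Bad.card * (D₀+1) : ℕ) : ℝ) ≤ ξ^7*(N:ℝ)^2 := le_trans (by exact_mod_cast hBadsum) hMP
      push_cast at h1
      have h2 : ξ^3*(N:ℝ) ≤ (D₀:ℝ)+1 := by linarith
      have key : (0.001*(ξ*(N:ℝ)))*(ξ^3*(N:ℝ)) ≤ (Bad.card:ℝ)*((D₀:ℝ)+1) :=
        mul_le_mul hcon.le h2 (by positivity) (Nat.cast_nonneg _)
      have hξ3 : ξ^3 ≤ (1/1000000000:ℝ) := by nlinarith
      have h7 : ξ^7*(N:ℝ)^2 ≤ (1/1000000000:ℝ)*(ξ^4*(N:ℝ)^2) := by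
        calc ξ^7*(N:ℝ)^2 = ξ^3*(ξ^4*(N:ℝ)^2) := by ring
          _ ≤ _ := mul_le_mul_of_nonneg_right hξ3 (by positivity)
      nlinarith [mul_pos (mul_pos (mul_pos hξ0 hξ0) (mul_pos hξ0 hξ0)) (mul_pos hNpos hNpos)]
    have : (V₂'.card : ℝ) + Bad.card = N := by exact_mod_cast congrArg (Nat.cast : ℕ → ℝ) hcardsplit
    linarith
  clear_value m D₀ MP V₁' V₂'
  clear hm hD₀def hMPdef hV₁def hV₂def
  have hfin2 : ∀ x : Fin 2, x ≠ 0 → x = 1 := by decide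
  have hfin2' : ∀ x : Fin 2, x ≠ 1 → x = 0 := by decide
  have hbound : ∀ (i : Fin 2) (P : Finset (Fin N × Fin N)),
      (∀ p ∈ P, (colorSubgraph G χ i).Adj (inl p.1) (inr p.2)) →
      Set.InjOn Prod.fst (↑P : Set (Fin N × Fin N)) →
      Set.InjOn Prod.snd (↑P : Set (Fin N × Fin N)) →
      (∀ p ∈ P, ∀ q ∈ P, (colorSubgraph G χ i).Reachable (inl p.1) (inl q.1)) →
      (P.card : ℝ) < m i := by
    intro i P h1 h2 h3 h4
    by_contra hge
    push_neg at hge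
    exact hno i (pairs_to_conn G χ i P h1 h2 h3 h4 _ (by rw [ht i]; linarith))
  have hreachblock : ∀ (i : Fin 2) (S₁ S₂ : Finset (Fin N)), S₁ ⊆ V₁' → S₂ ⊆ V₂' →
      (∀ a ∈ S₁, ∀ b ∈ S₂, G.Adj (inl a) (inr b) → χ s(inl a, inr b) = i) →
      2*D₀ < S₁.card → 2*D₀ < S₂.card →
      (∀ a ∈ S₁, ∀ a' ∈ S₁, (colorSubgraph G χ i).Reachable (inl a) (inl a')) ∧
      (∀ a ∈ S₁, ∀ b ∈ S₂, (colorSubgraph G χ i).Reachable (inl a) (inr b)) ∧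
      (∀ b ∈ S₂, ∀ b' ∈ S₂, (colorSubgraph G χ i).Reachable (inr b) (inr b')) := by
    intro i S₁ S₂ h1 h2 hmono hc1 hc2
    have hll : ∀ a ∈ S₁, ∀ a' ∈ S₁, (colorSubgraph G χ i).Reachable (inl a) (inl a') := by
      intro a ha a' ha'
      obtain ⟨b, hb, hab, ha'b⟩ := common_nbr (adj := fun a b => G.Adj (inl a) (inr b))
        (hclean1 a (h1 ha) S₂) (hclean1 a' (h1 ha') S₂) hc2
      have e1 : (colorSubgraph G χ i).Adj (inl a) (inr b) := ⟨hab, hmono a ha b hb hab⟩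
      have e2 : (colorSubgraph G χ i).Adj (inl a') (inr b) := ⟨ha'b, hmono a' ha' b hb ha'b⟩
      exact e1.reachable.trans e2.symm.reachable
    have hrr : ∀ b ∈ S₂, ∀ b' ∈ S₂, (colorSubgraph G χ i).Reachable (inr b) (inr b') := by
      intro b hb b' hb'
      obtain ⟨a, ha, hab, hab'⟩ := common_nbr (adj := fun b a => G.Adj (inl a) (inr b))
        (hclean2 b (h2 hb) S₁) (hclean2 b' (h2 hb') S₁) hc1
      have e1 : (colorSubgraph G χ i).Adj (inl a) (inr b) := ⟨hab, hmono a ha b hb hab⟩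
      have e2 : (colorSubgraph G χ i).Adj (inl a) (inr b') := ⟨hab', hmono a ha b' hb' hab'⟩
      exact e1.symm.reachable.trans e2.reachable
    refine ⟨hll, ?_, hrr⟩
    intro a ha b hb
    obtain ⟨a', ha', ha'b⟩ := exists_nbr (adj := fun b a => G.Adj (inl a) (inr b))
      (hclean2 b (h2 hb) S₁) (by omega : D₀ < S₁.card)
    have e3 : (colorSubgraph G χ i).Adj (inl a') (inr b) := ⟨ha'b, hmono a' ha' b hb ha'b⟩
    exact (hll a ha a' ha').trans e3.reachable
  -- a monochromatic (color 1) dense block has a small side, else it carries a big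
  -- connected color-1 matching
  have blockSmall : ∀ S₁ S₂ : Finset (Fin N), S₁ ⊆ V₁' → S₂ ⊆ V₂' →
      (∀ a ∈ S₁, ∀ b ∈ S₂, G.Adj (inl a) (inr b) → χ s(inl a, inr b) = 1) →
      ((S₁.card:ℝ) ≤ m 1 + 0.02*(ξ*(N:ℝ)) ∨ (S₂.card:ℝ) ≤ m 1 + 0.02*(ξ*(N:ℝ))) := by
    intro S₁ S₂ h1 h2 hmono
    by_cases hc1 : 2*D₀ < S₁.card
    · by_cases hc2 : 2*D₀ < S₂.card
      · obtain ⟨P, hP, hPmax⟩ := exists_maximal_pairs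
          (fun a b => (colorSubgraph G χ 1).Adj (inl a) (inr b)) S₁ S₂
        have hreach := hreachblock 1 S₁ S₂ h1 h2 hmono hc1 hc2
        have hPm : (P.card : ℝ) < m 1 := by
          apply hbound 1 P (fun p hp => (hP.1 p hp).2.2) hP.2.1 hP.2.2
          intro p hp q hq
          exact hreach.1 p.1 (hP.1 p hp).1 q.1 (hP.1 q hq).1
        have hnon : ∀ a ∈ S₁ \ P.image Prod.fst, ∀ b ∈ S₂ \ P.image Prod.snd,
            ¬ G.Adj (inl a) (inr b) := by
          intro a ha b hb hadj
          rw [mem_sdiff] at ha hb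
          exact hPmax a ha.1 ha.2 b hb.1 hb.2 ⟨hadj, hmono a ha.1 b hb.1 hadj⟩
        have hL1 : ((S₁ \ P.image Prod.fst).card : ℝ) = S₁.card - P.card :=
          leftover_card (pairM_card_fst hP).2 (pairM_card_fst hP).1
        have hL2 : ((S₂ \ P.image Prod.snd).card : ℝ) = S₂.card - P.card :=
          leftover_card (pairM_card_snd hP).2 (pairM_card_snd hP).1
        rcases hblockz _ _ hnon with h | h
        · left; rw [hL1] at h; linarith only [hPm, hxN, h]
        · right; rw [hL2] at h; linarith only [hPm, hxN, h]
      · right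
        push_neg at hc2
        have : (S₂.card : ℝ) ≤ 2*D₀ := by exact_mod_cast hc2
        nlinarith [hm1pos]
    · left
      push_neg at hc1
      have : (S₁.card : ℝ) ≤ 2*D₀ := by exact_mod_cast hc1
      linarith only [this, hD₀u, hm1pos, hxN]
  -- Claim A : every color-0 component (meeting the cleaned set) is small on both sides
  have hclaimA : ∀ v ∈ V₁',
      ((V₁'.filter fun a => (colorSubgraph G χ 0).Reachable (inl a) (inl v)).card : ℝ)
        ≤ m 1 + 0.02*(ξ*(N:ℝ)) ∧
      ((V₂'.filter fun b => (colorSubgraph G χ 0).Reachable (inr b) (inl v)).card : ℝ)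
        ≤ m 1 + 0.02*(ξ*(N:ℝ)) := by
    intro v hv
    set A := V₁'.filter (fun a => (colorSubgraph G χ 0).Reachable (inl a) (inl v)) with hAdef
    set C := V₂'.filter (fun b => (colorSubgraph G χ 0).Reachable (inr b) (inl v)) with hCdef
    set B := V₁' \ A with hBdef
    set D := V₂' \ C with hDdef
    have hAmem : ∀ a, a ∈ A ↔ a ∈ V₁' ∧ (colorSubgraph G χ 0).Reachable (inl a) (inl v) :=
      fun a => by rw [hAdef, mem_filter]
    have hCmem : ∀ b, b ∈ C ↔ b ∈ V₂' ∧ (colorSubgraph G χ 0).Reachable (inr b) (inl v) :=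
      fun b => by rw [hCdef, mem_filter]
    have hBmem : ∀ a, a ∈ B ↔ a ∈ V₁' ∧ a ∉ A := fun a => by rw [hBdef, mem_sdiff]
    have hDmem : ∀ b, b ∈ D ↔ b ∈ V₂' ∧ b ∉ C := fun b => by rw [hDdef, mem_sdiff]
    have hAsub : A ⊆ V₁' := fun a ha => ((hAmem a).1 ha).1
    have hCsub : C ⊆ V₂' := fun b hb => ((hCmem b).1 hb).1
    have hBsub : B ⊆ V₁' := fun a ha => ((hBmem a).1 ha).1
    have hDsub : D ⊆ V₂' := fun b hb => ((hDmem b).1 hb).1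
    have hABcard : (A.card:ℝ) + B.card = V₁'.card := by
      have := leftover_card hAsub (rfl : A.card = A.card)
      rw [hBdef]; linarith
    have hCDcard : (C.card:ℝ) + D.card = V₂'.card := by
      have := leftover_card hCsub (rfl : C.card = C.card)
      rw [hDdef]; linarith
    clear_value A C B D
    clear hAdef hCdef hBdef hDdef
    have f1 : ∀ a ∈ A, ∀ b ∈ D, G.Adj (inl a) (inr b) → χ s(inl a, inr b) = 1 := by
      intro a ha b hb hadj
      by_contra hne
      have e : (colorSubgraph G χ 0).Adj (inl a) (inr b) := ⟨hadj, hfin2' _ hne⟩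
      exact ((hDmem b).1 hb).2 ((hCmem b).2 ⟨((hDmem b).1 hb).1,
        e.symm.reachable.trans ((hAmem a).1 ha).2⟩)
    have f2 : ∀ a ∈ B, ∀ b ∈ C, G.Adj (inl a) (inr b) → χ s(inl a, inr b) = 1 := by
      intro a ha b hb hadj
      by_contra hne
      have e : (colorSubgraph G χ 0).Adj (inl a) (inr b) := ⟨hadj, hfin2' _ hne⟩
      exact ((hBmem a).1 ha).2 ((hAmem a).2 ⟨((hBmem a).1 ha).1,
        e.reachable.trans ((hCmem b).1 hb).2⟩)
    rcases blockSmall A D hAsub hDsub f1 with hA | hD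
    · rcases blockSmall B C hBsub hCsub f2 with hB | hC
      · exfalso; linarith [hn₁, hgap, hm21, hxN, hABcard]
      · exact ⟨hA, hC⟩
    · rcases blockSmall B C hBsub hCsub f2 with hB | hC
      swap
      · exfalso; linarith [hn₂, hgap, hm21, hxN, hCDcard]
      exfalso
      -- the main case : B and D are small
      have hAcard : (N:ℝ) - 0.001*(ξ*(N:ℝ)) - (m 1 + 0.02*(ξ*(N:ℝ))) ≤ A.card := by
        linarith [hn₁, hABcard]
      have hCcard : (N:ℝ) - 0.001*(ξ*(N:ℝ)) - (m 1 + 0.02*(ξ*(N:ℝ))) ≤ C.card := by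
        linarith [hn₂, hCDcard]
      obtain ⟨P₁, hP₁, hP₁max⟩ := exists_maximal_pairs
        (fun a b => (colorSubgraph G χ 0).Adj (inl a) (inr b)) A C
      have hP₁m : (P₁.card : ℝ) < m 0 := by
        apply hbound 0 P₁ (fun p hp => (hP₁.1 p hp).2.2) hP₁.2.1 hP₁.2.2
        intro p hp q hq
        exact ((hAmem p.1).1 (hP₁.1 p hp).1).2.trans ((hAmem q.1).1 (hP₁.1 q hq).1).2.symm
      set U₁ := A \ P₁.image Prod.fst with hU₁def
      set U₂ := C \ P₁.image Prod.snd with hU₂def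
      have hU₁sub : U₁ ⊆ A := sdiff_subset
      have hU₂sub : U₂ ⊆ C := sdiff_subset
      have hU₁card : (U₁.card:ℝ) = A.card - P₁.card :=
        leftover_card (pairM_card_fst hP₁).2 (pairM_card_fst hP₁).1
      have hU₂card : (U₂.card:ℝ) = C.card - P₁.card :=
        leftover_card (pairM_card_snd hP₁).2 (pairM_card_snd hP₁).1
      have hUcol : ∀ a ∈ U₁, ∀ b ∈ U₂, G.Adj (inl a) (inr b) → χ s(inl a, inr b) = 1 := by
        intro a ha b hb hadj
        by_contra hne
        rw [hU₁def, mem_sdiff] at ha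
        rw [hU₂def, mem_sdiff] at hb
        exact hP₁max a ha.1 ha.2 b hb.1 hb.2 ⟨hadj, hfin2' _ hne⟩
      have hU₁notim : ∀ a ∈ U₁, a ∉ P₁.image Prod.fst := by
        intro a ha; rw [hU₁def, mem_sdiff] at ha; exact ha.2
      have hU₂notim : ∀ b ∈ U₂, b ∉ P₁.image Prod.snd := by
        intro b hb; rw [hU₂def, mem_sdiff] at hb; exact hb.2
      clear_value U₁ U₂
      clear hU₁def hU₂def
      have hU₁V : U₁ ⊆ V₁' := hU₁sub.trans hAsub
      have hU₂V : U₂ ⊆ V₂' := hU₂sub.trans hCsub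
      have hU₁big : 3.8*(ξ*(N:ℝ)) ≤ U₁.card := by
        rw [hU₁card]; linarith [hAcard, hP₁m, hgap, hm21, hxN]
      have hU₂big : 3.8*(ξ*(N:ℝ)) ≤ U₂.card := by
        rw [hU₂card]; linarith [hCcard, hP₁m, hgap, hm21, hxN]
      have hU₁n : 2*D₀ < U₁.card := by
        have h : ((2*D₀ : ℕ):ℝ) < (U₁.card:ℝ) := by push_cast; linarith [hD₀u, hxN]
        exact_mod_cast h
      have hU₂n : 2*D₀ < U₂.card := by
        have h : ((2*D₀ : ℕ):ℝ) < (U₂.card:ℝ) := by push_cast; linarith [hD₀u, hxN]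
        exact_mod_cast h
      have hUreach := hreachblock 1 U₁ U₂ hU₁V hU₂V hUcol hU₁n hU₂n
      obtain ⟨b₀, hb₀⟩ := Finset.card_pos.1 (show 0 < U₂.card by omega)
      have hattU : ∀ x ∈ U₁, (colorSubgraph G χ 1).Reachable (inl x) (inr b₀) :=
        fun x hx => hUreach.2.1 x hx b₀ hb₀
      have hattB : ∀ x ∈ B, (colorSubgraph G χ 1).Reachable (inl x) (inr b₀) := by
        intro x hx
        obtain ⟨b, hb, hadj⟩ := exists_nbr (adj := fun a b => G.Adj (inl a) (inr b))
          (hclean1 x (hBsub hx) U₂) (show D₀ < U₂.card by omega)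
        have e : (colorSubgraph G χ 1).Adj (inl x) (inr b) := ⟨hadj, f2 x hx b (hU₂sub hb) hadj⟩
        exact e.reachable.trans (hUreach.2.2 b hb b₀ hb₀)
      have hattD : ∀ y ∈ D, (colorSubgraph G χ 1).Reachable (inr y) (inr b₀) := by
        intro y hy
        obtain ⟨a, ha, hadj⟩ := exists_nbr (adj := fun b a => G.Adj (inl a) (inr b))
          (hclean2 y (hDsub hy) U₁) (show D₀ < U₁.card by omega)
        have e : (colorSubgraph G χ 1).Adj (inl a) (inr y) := ⟨hadj, f1 a (hU₁sub ha) y hy hadj⟩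
        exact e.symm.reachable.trans (hUreach.2.1 a ha b₀ hb₀)
      by_cases hDbig : D₀ < D.card
      · by_cases hBbig : D₀ < B.card
        · -- case (c) : B and D both of size > D₀
          have hattA : ∀ x ∈ A, (colorSubgraph G χ 1).Reachable (inl x) (inr b₀) := by
            intro x hx
            obtain ⟨y, hy, hadj⟩ := exists_nbr (adj := fun a b => G.Adj (inl a) (inr b))
              (hclean1 x (hAsub hx) D) hDbig
            have e : (colorSubgraph G χ 1).Adj (inl x) (inr y) := ⟨hadj, f1 x hx y hy hadj⟩
            exact e.reachable.trans (hattD y hy)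
          obtain ⟨PAD, hPAD, hPADmax⟩ := exists_maximal_pairs
            (fun a b => (colorSubgraph G χ 1).Adj (inl a) (inr b)) A D
          have hPADnon : ∀ a ∈ A \ PAD.image Prod.fst, ∀ b ∈ D \ PAD.image Prod.snd,
              ¬ G.Adj (inl a) (inr b) := by
            intro a ha b hb hadj
            rw [mem_sdiff] at ha hb
            exact hPADmax a ha.1 ha.2 b hb.1 hb.2 ⟨hadj, f1 a ha.1 b hb.1 hadj⟩
          have hPADf : ((A \ PAD.image Prod.fst).card : ℝ) = A.card - PAD.card :=
            leftover_card (pairM_card_fst hPAD).2 (pairM_card_fst hPAD).1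
          have hPADs : ((D \ PAD.image Prod.snd).card : ℝ) = D.card - PAD.card :=
            leftover_card (pairM_card_snd hPAD).2 (pairM_card_snd hPAD).1
          have hPADge : (D.card:ℝ) - 0.01*(ξ*(N:ℝ)) ≤ PAD.card := by
            rcases hblockz _ _ hPADnon with h | h
            · rw [hPADf] at h; linarith [hAcard, hD, hgap, hm21, hxN]
            · rw [hPADs] at h; linarith
          obtain ⟨PBC, hPBC, hPBCmax⟩ := exists_maximal_pairs
            (fun a b => (colorSubgraph G χ 1).Adj (inl a) (inr b)) B C
          have hPBCnon : ∀ a ∈ B \ PBC.image Prod.fst, ∀ b ∈ C \ PBC.image Prod.snd,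
              ¬ G.Adj (inl a) (inr b) := by
            intro a ha b hb hadj
            rw [mem_sdiff] at ha hb
            exact hPBCmax a ha.1 ha.2 b hb.1 hb.2 ⟨hadj, f2 a ha.1 b hb.1 hadj⟩
          have hPBCf : ((B \ PBC.image Prod.fst).card : ℝ) = B.card - PBC.card :=
            leftover_card (pairM_card_fst hPBC).2 (pairM_card_fst hPBC).1
          have hPBCs : ((C \ PBC.image Prod.snd).card : ℝ) = C.card - PBC.card :=
            leftover_card (pairM_card_snd hPBC).2 (pairM_card_snd hPBC).1
          have hPBCge : (B.card:ℝ) - 0.01*(ξ*(N:ℝ)) ≤ PBC.card := by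
            rcases hblockz _ _ hPBCnon with h | h
            · rw [hPBCf] at h; linarith
            · rw [hPBCs] at h; linarith [hCcard, hB, hgap, hm21, hxN]
          set U₁' := U₁ \ PAD.image Prod.fst with hU₁'def
          set U₂' := U₂ \ PBC.image Prod.snd with hU₂'def
          have hU₁'sub : U₁' ⊆ U₁ := sdiff_subset
          have hU₂'sub : U₂' ⊆ U₂ := sdiff_subset
          have hU₁'notim : ∀ a ∈ U₁', a ∉ PAD.image Prod.fst := by
            intro a ha; rw [hU₁'def, mem_sdiff] at ha; exact ha.2
          have hU₂'notim : ∀ b ∈ U₂', b ∉ PBC.image Prod.snd := by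
            intro b hb; rw [hU₂'def, mem_sdiff] at hb; exact hb.2
          have hU₁'card : (U₁.card:ℝ) - PAD.card ≤ U₁'.card := by
            have h := Finset.card_le_card_sdiff_add_card (s := U₁) (t := PAD.image Prod.fst)
            rw [(pairM_card_fst hPAD).1] at h
            have h' : (U₁.card : ℝ) ≤ ((U₁ \ PAD.image Prod.fst).card : ℝ) + PAD.card := by
              exact_mod_cast h
            rw [hU₁'def]
            linarith
          have hU₂'card : (U₂.card:ℝ) - PBC.card ≤ U₂'.card := by
            have h := Finset.card_le_card_sdiff_add_card (s := U₂) (t := PBC.image Prod.snd)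
            rw [(pairM_card_snd hPBC).1] at h
            have h' : (U₂.card : ℝ) ≤ ((U₂ \ PBC.image Prod.snd).card : ℝ) + PBC.card := by
              exact_mod_cast h
            rw [hU₂'def]
            linarith
          clear_value U₁' U₂'
          clear hU₁'def hU₂'def
          obtain ⟨PS, hPS, hPSmax⟩ := exists_maximal_pairs
            (fun a b => (colorSubgraph G χ 1).Adj (inl a) (inr b)) U₁' U₂'
          have hPSnon : ∀ a ∈ U₁' \ PS.image Prod.fst, ∀ b ∈ U₂' \ PS.image Prod.snd,
              ¬ G.Adj (inl a) (inr b) := by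
            intro a ha b hb hadj
            rw [mem_sdiff] at ha hb
            exact hPSmax a ha.1 ha.2 b hb.1 hb.2
              ⟨hadj, hUcol a (hU₁'sub ha.1) b (hU₂'sub hb.1) hadj⟩
          have hPSf : ((U₁' \ PS.image Prod.fst).card : ℝ) = U₁'.card - PS.card :=
            leftover_card (pairM_card_fst hPS).2 (pairM_card_fst hPS).1
          have hPSs : ((U₂' \ PS.image Prod.snd).card : ℝ) = U₂'.card - PS.card :=
            leftover_card (pairM_card_snd hPS).2 (pairM_card_snd hPS).1
          have hPSge : (U₁'.card:ℝ) - 0.01*(ξ*(N:ℝ)) ≤ PS.card ∨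
              (U₂'.card:ℝ) - 0.01*(ξ*(N:ℝ)) ≤ PS.card := by
            rcases hblockz _ _ hPSnon with h | h
            · left; rw [hPSf] at h; linarith
            · right; rw [hPSs] at h; linarith
          -- combine the three matchings
          have hu3 := union3 hPAD.2.1 hPBC.2.1 hPS.2.1 hPAD.2.2 hPBC.2.2 hPS.2.2
            (by intro p hp q hq heq
                exact ((hBmem q.1).1 (hPBC.1 q hq).1).2 (heq ▸ (hPAD.1 p hp).1))
            (by intro p hp q hq heq
                exact hU₁'notim q.1 (hPS.1 q hq).1 (heq ▸ mem_image_of_mem Prod.fst hp))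
            (by intro p hp q hq heq
                exact ((hBmem p.1).1 (hPBC.1 p hp).1).2
                  (heq ▸ hU₁sub (hU₁'sub (hPS.1 q hq).1) : p.1 ∈ A))
            (by intro p hp q hq heq
                exact ((hDmem p.2).1 (hPAD.1 p hp).2.1).2 (heq ▸ (hPBC.1 q hq).2.1))
            (by intro p hp q hq heq
                exact ((hDmem p.2).1 (hPAD.1 p hp).2.1).2
                  (heq ▸ hU₂sub (hU₂'sub (hPS.1 q hq).2.1) : p.2 ∈ C))
            (by intro p hp q hq heq
                exact hU₂'notim q.2 (hPS.1 q hq).2.1 (heq ▸ mem_image_of_mem Prod.snd hp))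
          have hre : ∀ p ∈ PAD ∪ PBC ∪ PS,
              (colorSubgraph G χ 1).Reachable (inl p.1) (inr b₀) := by
            intro p hp
            rw [mem_union, mem_union] at hp
            rcases hp with (hp | hp) | hp
            · exact hattA p.1 (hPAD.1 p hp).1
            · exact hattB p.1 (hPBC.1 p hp).1
            · exact hattU p.1 (hU₁'sub (hPS.1 p hp).1)
          have hadjP : ∀ p ∈ PAD ∪ PBC ∪ PS, (colorSubgraph G χ 1).Adj (inl p.1) (inr p.2) := by
            intro p hp
            rw [mem_union, mem_union] at hp
            rcases hp with (hp | hp) | hp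
            · exact (hPAD.1 p hp).2.2
            · exact (hPBC.1 p hp).2.2
            · exact (hPS.1 p hp).2.2
          have hPm : (((PAD ∪ PBC ∪ PS).card : ℕ) : ℝ) < m 1 := by
            apply hbound 1 _ hadjP hu3.1 hu3.2.1
            intro p hp q hq
            exact (hre p hp).trans (hre q hq).symm
          have hPcard : (((PAD ∪ PBC ∪ PS).card : ℕ) : ℝ) = (PAD.card:ℝ) + PBC.card + PS.card := by
            rw [hu3.2.2]; push_cast; ring
          rw [hPcard] at hPm
          rcases hPSge with h | h
          · linarith [hU₁'card, hU₁card, hPBCge, hAcard, hP₁m, hgap, hm21, hxN, hD₀u, hABcard, hn₁]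
          · linarith [hU₂'card, hU₂card, hPADge, hCcard, hP₁m, hgap, hm21, hxN, hD₀u, hCDcard, hn₂]
        · -- case (b) : B is tiny
          push_neg at hBbig
          have hBreal : (B.card : ℝ) ≤ D₀ := by exact_mod_cast hBbig
          have hdisj : Disjoint U₂ D := by
            rw [Finset.disjoint_left]
            intro b hb hbD
            exact ((hDmem b).1 hbD).2 (hU₂sub hb)
          obtain ⟨P₂, hP₂, hP₂max⟩ := exists_maximal_pairs
            (fun a b => (colorSubgraph G χ 1).Adj (inl a) (inr b)) U₁ (U₂ ∪ D)
          have hP₂m : (P₂.card : ℝ) < m 1 := by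
            apply hbound 1 P₂ (fun p hp => (hP₂.1 p hp).2.2) hP₂.2.1 hP₂.2.2
            intro p hp q hq
            exact (hattU p.1 (hP₂.1 p hp).1).trans (hattU q.1 (hP₂.1 q hq).1).symm
          have hnon : ∀ a ∈ U₁ \ P₂.image Prod.fst, ∀ b ∈ (U₂ ∪ D) \ P₂.image Prod.snd,
              ¬ G.Adj (inl a) (inr b) := by
            intro a ha b hb hadj
            rw [mem_sdiff] at ha hb
            have hcol : χ s(inl a, inr b) = 1 := by
              rcases mem_union.1 hb.1 with h | h
              · exact hUcol a ha.1 b h hadj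
              · exact f1 a (hU₁sub ha.1) b h hadj
            exact hP₂max a ha.1 ha.2 b hb.1 hb.2 ⟨hadj, hcol⟩
          have hW₁ : ((U₁ \ P₂.image Prod.fst).card : ℝ) = U₁.card - P₂.card :=
            leftover_card (pairM_card_fst hP₂).2 (pairM_card_fst hP₂).1
          have hW₂ : (((U₂ ∪ D) \ P₂.image Prod.snd).card : ℝ) = (U₂.card + D.card) - P₂.card := by
            have := leftover_card (pairM_card_snd hP₂).2 (pairM_card_snd hP₂).1
            rw [this, card_union_of_disjoint hdisj]
            push_cast; ring
          rcases hblockz _ _ hnon with h | h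
          · rw [hW₁] at h
            linarith [hU₁card, hAcard, hABcard, hn₁, hP₁m, hP₂m, hgap, hm21, hxN, hD₀u, hBreal]
          · rw [hW₂] at h
            linarith [hU₂card, hCcard, hCDcard, hn₂, hP₁m, hP₂m, hgap, hm21, hxN, hD₀u]
      · -- case (a) : D is tiny
        push_neg at hDbig
        have hDreal : (D.card : ℝ) ≤ D₀ := by exact_mod_cast hDbig
        have hdisj : Disjoint U₁ B := by
          rw [Finset.disjoint_left]
          intro a ha haB
          exact ((hBmem a).1 haB).2 (hU₁sub ha)
        obtain ⟨P₂, hP₂, hP₂max⟩ := exists_maximal_pairs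
          (fun a b => (colorSubgraph G χ 1).Adj (inl a) (inr b)) (U₁ ∪ B) U₂
        have hre : ∀ x ∈ U₁ ∪ B, (colorSubgraph G χ 1).Reachable (inl x) (inr b₀) := by
          intro x hx
          rcases mem_union.1 hx with h | h
          · exact hattU x h
          · exact hattB x h
        have hP₂m : (P₂.card : ℝ) < m 1 := by
          apply hbound 1 P₂ (fun p hp => (hP₂.1 p hp).2.2) hP₂.2.1 hP₂.2.2
          intro p hp q hq
          exact (hre p.1 (hP₂.1 p hp).1).trans (hre q.1 (hP₂.1 q hq).1).symm
        have hnon : ∀ a ∈ (U₁ ∪ B) \ P₂.image Prod.fst, ∀ b ∈ U₂ \ P₂.image Prod.snd,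
            ¬ G.Adj (inl a) (inr b) := by
          intro a ha b hb hadj
          rw [mem_sdiff] at ha hb
          have hcol : χ s(inl a, inr b) = 1 := by
            rcases mem_union.1 ha.1 with h | h
            · exact hUcol a h b hb.1 hadj
            · exact f2 a h b (hU₂sub hb.1) hadj
          exact hP₂max a ha.1 ha.2 b hb.1 hb.2 ⟨hadj, hcol⟩
        have hW₁ : (((U₁ ∪ B) \ P₂.image Prod.fst).card : ℝ) = (U₁.card + B.card) - P₂.card := by
          have := leftover_card (pairM_card_fst hP₂).2 (pairM_card_fst hP₂).1
          rw [this, card_union_of_disjoint hdisj]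
          push_cast; ring
        have hW₂ : ((U₂ \ P₂.image Prod.snd).card : ℝ) = U₂.card - P₂.card :=
          leftover_card (pairM_card_snd hP₂).2 (pairM_card_snd hP₂).1
        rcases hblockz _ _ hnon with h | h
        · rw [hW₁] at h
          linarith [hU₁card, hAcard, hABcard, hn₁, hP₁m, hP₂m, hgap, hm21, hxN, hD₀u]
        · rw [hW₂] at h
          linarith [hU₂card, hCcard, hCDcard, hn₂, hP₁m, hP₂m, hgap, hm21, hxN, hD₀u, hDreal]
  -- Final argument
  have hxNN : ξ*(N:ℝ) ≤ (N:ℝ) := by nlinarith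
  have hV₁ne : V₁'.Nonempty := by
    rw [← Finset.card_pos]
    have h : (0:ℝ) < V₁'.card := by linarith [hn₁, hxN, hNpos, hxNN]
    exact_mod_cast h
  obtain ⟨v₀, hv₀⟩ := hV₁ne
  set A' := V₁'.filter (fun a => (colorSubgraph G χ 1).Reachable (inl a) (inl v₀)) with hA'def
  set C' := V₂'.filter (fun b => (colorSubgraph G χ 1).Reachable (inr b) (inl v₀)) with hC'def
  set B' := V₁' \ A' with hB'def
  set D' := V₂' \ C' with hD'def
  have hA'mem : ∀ a, a ∈ A' ↔ a ∈ V₁' ∧ (colorSubgraph G χ 1).Reachable (inl a) (inl v₀) :=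
    fun a => by rw [hA'def, mem_filter]
  have hC'mem : ∀ b, b ∈ C' ↔ b ∈ V₂' ∧ (colorSubgraph G χ 1).Reachable (inr b) (inl v₀) :=
    fun b => by rw [hC'def, mem_filter]
  have hB'mem : ∀ a, a ∈ B' ↔ a ∈ V₁' ∧ a ∉ A' := fun a => by rw [hB'def, mem_sdiff]
  have hD'mem : ∀ b, b ∈ D' ↔ b ∈ V₂' ∧ b ∉ C' := fun b => by rw [hD'def, mem_sdiff]
  have hA'sub : A' ⊆ V₁' := fun a ha => ((hA'mem a).1 ha).1
  have hC'sub : C' ⊆ V₂' := fun b hb => ((hC'mem b).1 hb).1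
  have hB'sub : B' ⊆ V₁' := fun a ha => ((hB'mem a).1 ha).1
  have hA'B'card : (A'.card:ℝ) + B'.card = V₁'.card := by
    have := leftover_card hA'sub (rfl : A'.card = A'.card)
    rw [hB'def]; linarith
  have hC'D'card : (C'.card:ℝ) + D'.card = V₂'.card := by
    have := leftover_card hC'sub (rfl : C'.card = C'.card)
    rw [hD'def]; linarith
  clear_value A' C' B' D'
  clear hA'def hC'def hB'def hD'def
  -- almost all of v₀'s neighbours lie in its two components
  have hnb : (V₂'.card:ℝ) - D₀ ≤
      ((V₂'.filter fun b => (colorSubgraph G χ 0).Reachable (inr b) (inl v₀)).card : ℝ)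
        + C'.card := by
    have hsub : V₂'.filter (fun b => G.Adj (inl v₀) (inr b)) ⊆
        (V₂'.filter fun b => (colorSubgraph G χ 0).Reachable (inr b) (inl v₀)) ∪ C' := by
      intro b hb
      rw [mem_filter] at hb
      by_cases h0 : χ s(inl v₀, inr b) = 0
      · apply mem_union_left
        refine mem_filter.2 ⟨hb.1, ?_⟩
        have e : (colorSubgraph G χ 0).Adj (inl v₀) (inr b) := ⟨hb.2, h0⟩
        exact e.symm.reachable
      · apply mem_union_right
        apply (hC'mem b).2
        refine ⟨hb.1, ?_⟩
        have e : (colorSubgraph G χ 1).Adj (inl v₀) (inr b) := ⟨hb.2, hfin2 _ h0⟩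
        exact e.symm.reachable
    have h1 : V₂'.card ≤ (V₂'.filter (fun b => G.Adj (inl v₀) (inr b))).card + D₀ := by
      have hsplit := Finset.card_filter_add_card_filter_not
        (s := V₂') (p := fun b => G.Adj (inl v₀) (inr b))
      have h2 := hclean1 v₀ hv₀ V₂'
      omega
    have h3 := card_le_card hsub
    have h4 := card_union_le
      (V₂'.filter fun b => (colorSubgraph G χ 0).Reachable (inr b) (inl v₀)) C'
    have h5 : V₂'.card ≤
        (V₂'.filter fun b => (colorSubgraph G χ 0).Reachable (inr b) (inl v₀)).card
          + C'.card + D₀ := by omega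
    have h6 : ((V₂'.card:ℕ):ℝ) ≤
        (((V₂'.filter fun b => (colorSubgraph G χ 0).Reachable (inr b) (inl v₀)).card
          + C'.card + D₀ : ℕ):ℝ) := by exact_mod_cast h5
    push_cast at h6
    linarith
  have hC'big : (N:ℝ) - m 1 - 0.03*(ξ*(N:ℝ)) ≤ C'.card := by
    have hcA := (hclaimA v₀ hv₀).2
    linarith [hn₂, hD₀u]
  have hC'n : 2*D₀ < C'.card := by
    have h : ((2*D₀:ℕ):ℝ) < (C'.card:ℝ) := by
      push_cast
      linarith [hD₀u, hxN, hgap, hm21, hm1pos, hC'big, hxNN, hNpos]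
    exact_mod_cast h
  have fB'C' : ∀ a ∈ B', ∀ b ∈ C', G.Adj (inl a) (inr b) → χ s(inl a, inr b) = 0 := by
    intro a ha b hb hadj
    by_contra hne
    have e : (colorSubgraph G χ 1).Adj (inl a) (inr b) := ⟨hadj, hfin2 _ hne⟩
    exact ((hB'mem a).1 ha).2 ((hA'mem a).2 ⟨((hB'mem a).1 ha).1,
      e.reachable.trans ((hC'mem b).1 hb).2⟩)
  by_cases hB'big : D₀ < B'.card
  · -- B' ∪ C' spans a huge color-0 component : contradiction with claim A
    obtain ⟨w, hw⟩ := Finset.card_pos.mp (show 0 < B'.card by omega)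
    have hwV : w ∈ V₁' := hB'sub hw
    have hsub : C' ⊆ V₂'.filter (fun b => (colorSubgraph G χ 0).Reachable (inr b) (inl w)) := by
      intro c hc
      refine mem_filter.2 ⟨hC'sub hc, ?_⟩
      obtain ⟨a', ha', hadj⟩ := exists_nbr (adj := fun b a => G.Adj (inl a) (inr b))
        (hclean2 c (hC'sub hc) B') hB'big
      have e1 : (colorSubgraph G χ 0).Adj (inl a') (inr c) := ⟨hadj, fB'C' a' ha' c hc hadj⟩
      obtain ⟨c₂, hc₂, h1, h2⟩ := common_nbr (adj := fun a b => G.Adj (inl a) (inr b))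
        (hclean1 a' (hB'sub ha') C') (hclean1 w hwV C') hC'n
      have e2 : (colorSubgraph G χ 0).Adj (inl a') (inr c₂) := ⟨h1, fB'C' a' ha' c₂ hc₂ h1⟩
      have e3 : (colorSubgraph G χ 0).Adj (inl w) (inr c₂) := ⟨h2, fB'C' w hw c₂ hc₂ h2⟩
      exact e1.symm.reachable.trans (e2.reachable.trans e3.symm.reachable)
    have hcard := card_le_card hsub
    have hcardR : (C'.card:ℝ) ≤
        ((V₂'.filter (fun b => (colorSubgraph G χ 0).Reachable (inr b) (inl w))).card : ℝ) := by
      exact_mod_cast hcard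
    have hcA := (hclaimA w hwV).2
    linarith [hC'big, hgap, hm21, hxN]
  · push_neg at hB'big
    have hB'real : (B'.card:ℝ) ≤ D₀ := by exact_mod_cast hB'big
    have hA'card : (N:ℝ) - 0.001*(ξ*(N:ℝ)) - D₀ ≤ A'.card := by
      linarith [hn₁, hA'B'card]
    have fA'D' : ∀ a ∈ A', ∀ b ∈ D', G.Adj (inl a) (inr b) → χ s(inl a, inr b) = 0 := by
      intro a ha b hb hadj
      by_contra hne
      have e : (colorSubgraph G χ 1).Adj (inl a) (inr b) := ⟨hadj, hfin2 _ hne⟩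
      exact ((hD'mem b).1 hb).2 ((hC'mem b).2 ⟨((hD'mem b).1 hb).1,
        e.symm.reachable.trans ((hA'mem a).1 ha).2⟩)
    by_cases hD'big : 2*D₀ < D'.card
    · -- A' ∪ D' spans a huge color-0 component
      obtain ⟨w, hw⟩ := Finset.card_pos.mp (show 0 < A'.card by
        have h : (0:ℝ) < A'.card := by linarith [hD₀u, hxN, hNpos, hxNN, hA'card]
        exact_mod_cast h)
      have hwV : w ∈ V₁' := hA'sub hw
      have hsub : A' ⊆ V₁'.filter (fun a => (colorSubgraph G χ 0).Reachable (inl a) (inl w)) := by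
        intro a ha
        refine mem_filter.2 ⟨hA'sub ha, ?_⟩
        obtain ⟨y, hy, h1, h2⟩ := common_nbr (adj := fun a b => G.Adj (inl a) (inr b))
          (hclean1 a (hA'sub ha) D') (hclean1 w hwV D') hD'big
        have e1 : (colorSubgraph G χ 0).Adj (inl a) (inr y) := ⟨h1, fA'D' a ha y hy h1⟩
        have e2 : (colorSubgraph G χ 0).Adj (inl w) (inr y) := ⟨h2, fA'D' w hw y hy h2⟩
        exact e1.reachable.trans e2.symm.reachable
      have hcard := card_le_card hsub
      have hcardR : (A'.card:ℝ) ≤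
          ((V₁'.filter (fun a => (colorSubgraph G χ 0).Reachable (inl a) (inl w))).card : ℝ) := by
        exact_mod_cast hcard
      have hcA := (hclaimA w hwV).1
      linarith [hA'card, hgap, hm21, hxN, hD₀u, hm1pos, hm0N]
    · push_neg at hD'big
      have hD'real : (D'.card:ℝ) ≤ 2*(D₀:ℝ) := by exact_mod_cast hD'big
      have hC'card2 : (N:ℝ) - 0.001*(ξ*(N:ℝ)) - 2*D₀ ≤ C'.card := by
        linarith [hn₂, hC'D'card]
      obtain ⟨P₂, hP₂, hP₂max⟩ := exists_maximal_pairs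
        (fun a b => (colorSubgraph G χ 1).Adj (inl a) (inr b)) A' C'
      have hP₂m : (P₂.card : ℝ) < m 1 := by
        apply hbound 1 P₂ (fun p hp => (hP₂.1 p hp).2.2) hP₂.2.1 hP₂.2.2
        intro p hp q hq
        exact ((hA'mem p.1).1 (hP₂.1 p hp).1).2.trans ((hA'mem q.1).1 (hP₂.1 q hq).1).2.symm
      set W₁ := A' \ P₂.image Prod.fst with hW₁def
      set W₂ := C' \ P₂.image Prod.snd with hW₂def
      have hW₁sub : W₁ ⊆ A' := sdiff_subset
      have hW₂sub : W₂ ⊆ C' := sdiff_subset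
      have hW₁card : (W₁.card:ℝ) = A'.card - P₂.card :=
        leftover_card (pairM_card_fst hP₂).2 (pairM_card_fst hP₂).1
      have hW₂card : (W₂.card:ℝ) = C'.card - P₂.card :=
        leftover_card (pairM_card_snd hP₂).2 (pairM_card_snd hP₂).1
      have hWcol : ∀ a ∈ W₁, ∀ b ∈ W₂, G.Adj (inl a) (inr b) → χ s(inl a, inr b) = 0 := by
        intro a ha b hb hadj
        by_contra hne
        rw [hW₁def, mem_sdiff] at ha
        rw [hW₂def, mem_sdiff] at hb
        exact hP₂max a ha.1 ha.2 b hb.1 hb.2 ⟨hadj, hfin2 _ hne⟩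
      clear_value W₁ W₂
      clear hW₁def hW₂def
      have hW₁big : 3.8*(ξ*(N:ℝ)) ≤ W₁.card := by
        rw [hW₁card]; linarith [hA'card, hP₂m, hgap, hm21, hxN, hD₀u]
      have hW₂big : 3.8*(ξ*(N:ℝ)) ≤ W₂.card := by
        rw [hW₂card]; linarith [hC'card2, hP₂m, hgap, hm21, hxN, hD₀u]
      have hW₁n : D₀ < W₁.card := by
        have h : ((D₀:ℕ):ℝ) < (W₁.card:ℝ) := by push_cast; linarith [hD₀u, hxN]
        exact_mod_cast h
      have hW₂n : 2*D₀ < W₂.card := by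
        have h : ((2*D₀:ℕ):ℝ) < (W₂.card:ℝ) := by push_cast; linarith [hD₀u, hxN]
        exact_mod_cast h
      obtain ⟨w, hw⟩ := Finset.card_pos.mp (show 0 < W₁.card by omega)
      have hwV : w ∈ V₁' := hA'sub (hW₁sub hw)
      have hsub : W₂ ⊆ V₂'.filter (fun b => (colorSubgraph G χ 0).Reachable (inr b) (inl w)) := by
        intro c hc
        refine mem_filter.2 ⟨hC'sub (hW₂sub hc), ?_⟩
        obtain ⟨a', ha', hadj⟩ := exists_nbr (adj := fun b a => G.Adj (inl a) (inr b))
          (hclean2 c (hC'sub (hW₂sub hc)) W₁) hW₁n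
        have e1 : (colorSubgraph G χ 0).Adj (inl a') (inr c) := ⟨hadj, hWcol a' ha' c hc hadj⟩
        obtain ⟨c₂, hc₂, h1, h2⟩ := common_nbr (adj := fun a b => G.Adj (inl a) (inr b))
          (hclean1 a' (hA'sub (hW₁sub ha')) W₂) (hclean1 w hwV W₂) hW₂n
        have e2 : (colorSubgraph G χ 0).Adj (inl a') (inr c₂) := ⟨h1, hWcol a' ha' c₂ hc₂ h1⟩
        have e3 : (colorSubgraph G χ 0).Adj (inl w) (inr c₂) := ⟨h2, hWcol w hw c₂ hc₂ h2⟩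
        exact e1.symm.reachable.trans (e2.reachable.trans e3.symm.reachable)
      have hcard := card_le_card hsub
      have hcardR : (W₂.card:ℝ) ≤
          ((V₂'.filter (fun b => (colorSubgraph G χ 0).Reachable (inr b) (inl w))).card : ℝ) := by
        exact_mod_cast hcard
      have hcA := (hclaimA w hwV).2
      linarith [hW₂card, hC'card2, hP₂m, hgap, hm21, hxN, hD₀u]
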